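/- For any E ⊆ 𝔽_q² and any nonempty Θ ⊆ 𝔽_q, there exists θ ∈ Θ such that the projection set E·(1,θ) = {v₁ + θ·v₂ : (v₁,v₂) ∈ E} has cardinality at least q·|E|·|Θ| / (q² + |E|·|Θ|). -/

import Mathlib

open Finset

lemma fiber_sq_eq_pairs {α β : Type*} [DecidableEq α] [DecidableEq β] [Fintype β]
    (E : Finset α) (f : α → β) :
    ∑ t : β, ((E.filter fun v => f v = t).card) ^ 2
      = ((E ×ˢ E).filter fun p => f p.1 = f p.2).card := by
  rw [Finset.card_eq_sum_card_fiberwise (f := fun p => f p.1) (t := Finset.univ) (by simp)]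
  refine Finset.sum_congr rfl fun t _ => ?_
  rw [sq, ← Finset.card_product]
  congr 1
  ext p
  simp only [Finset.mem_filter, Finset.mem_product]
  constructor <;> rintro h <;> obtain ⟨⟨h1,h2⟩,h3⟩ := h <;> simp_all

lemma sum_collisions {F : Type*} [Field F] [Fintype F] [DecidableEq F]
    (E : Finset (F × F)) :
    ∑ θ : F, ((E ×ˢ E).filter fun p => p.1.1 + θ * p.1.2 = p.2.1 + θ * p.2.2).card
      + ((E ×ˢ E).filter fun p => p.1.2 = p.2.2).card
    = Fintype.card F * E.card + E.card ^ 2 := by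
  have key : ∀ p : (F × F) × (F × F),
      (Finset.univ.filter fun θ : F => p.1.1 + θ * p.1.2 = p.2.1 + θ * p.2.2).card
        + (if p.1.2 = p.2.2 then 1 else 0)
      = (if p.1 = p.2 then Fintype.card F else 0) + 1 := by
    rintro ⟨⟨a, b⟩, ⟨c, d⟩⟩
    by_cases hbd : b = d
    · by_cases hac : a = c
      · simp [hbd, hac, Prod.ext_iff, Finset.filter_true_of_mem]
      · have : (Finset.univ.filter fun θ : F => a + θ * b = c + θ * d) = ∅ := by
          ext θ; simp [hbd, hac]
        simp [this, hbd, hac, Prod.ext_iff]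
    · have : (Finset.univ.filter fun θ : F => a + θ * b = c + θ * d)
          = {(c - a) / (b - d)} := by
        ext θ
        simp only [Finset.mem_filter, Finset.mem_univ, true_and, Finset.mem_singleton]
        rw [eq_div_iff (sub_ne_zero.mpr hbd)]
        constructor <;> intro h <;> linear_combination h
      simp [this, hbd, Prod.ext_iff, fun h : a = c => hbd]
  calc ∑ θ : F, ((E ×ˢ E).filter fun p => p.1.1 + θ * p.1.2 = p.2.1 + θ * p.2.2).card
      + ((E ×ˢ E).filter fun p => p.1.2 = p.2.2).card
      = ∑ p ∈ E ×ˢ E, ((Finset.univ.filter fun θ : F =>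
          p.1.1 + θ * p.1.2 = p.2.1 + θ * p.2.2).card + (if p.1.2 = p.2.2 then 1 else 0)) := by
        rw [Finset.sum_add_distrib]
        congr 1
        · simp only [Finset.card_filter]
          exact Finset.sum_comm
        · exact Finset.card_filter _ _
    _ = ∑ p ∈ E ×ˢ E, ((if p.1 = p.2 then Fintype.card F else 0) + 1) := by
        exact Finset.sum_congr rfl fun p _ => key p
    _ = Fintype.card F * E.card + E.card ^ 2 := by
        rw [Finset.sum_add_distrib, Finset.sum_const, Finset.card_product, smul_eq_mul, mul_one,
          ← sq, Finset.sum_product]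
        congr 1
        simp [Finset.sum_ite_eq, mul_comm]

lemma proj_count {F : Type*} [Fintype F] [DecidableEq F]
    (E : Finset (F × F)) (f : F × F → F) :
    E.card = ∑ t : F, (E.filter fun v => f v = t).card :=
  Finset.card_eq_sum_card_fiberwise (by simp)

lemma cs_lower {F : Type*} [Fintype F] [DecidableEq F]
    (E : Finset (F × F)) (f : F × F → F) :
    (E.card : ℝ) ^ 2 ≤ (Fintype.card F : ℝ)
      * (((E ×ˢ E).filter fun p => f p.1 = f p.2).card : ℝ) := by
  have h2 : ∑ t : F, ((E.filter fun v => f v = t).card : ℝ) ^ 2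
      = (((E ×ˢ E).filter fun p => f p.1 = f p.2).card : ℝ) := by
    exact_mod_cast congrArg (Nat.cast : ℕ → ℝ) (fiber_sq_eq_pairs E f)
  calc (E.card : ℝ) ^ 2 = (∑ t : F, ((E.filter fun v => f v = t).card : ℝ)) ^ 2 := by
        rw [proj_count E f]; push_cast; ring
    _ ≤ ((Finset.univ : Finset F).card : ℝ)
        * ∑ t : F, ((E.filter fun v => f v = t).card : ℝ) ^ 2 := by
        exact_mod_cast sq_sum_le_card_mul_sum_sq
    _ = _ := by rw [h2, Finset.card_univ]

lemma cs_image {F : Type*} [Fintype F] [DecidableEq F]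
    (E : Finset (F × F)) (f : F × F → F) :
    (E.card : ℝ) ^ 2 ≤ ((E.image f).card : ℝ)
      * (((E ×ˢ E).filter fun p => f p.1 = f p.2).card : ℝ) := by
  have hcard : E.card = ∑ t ∈ E.image f, (E.filter fun v => f v = t).card :=
    Finset.card_eq_sum_card_fiberwise (fun x hx => Finset.mem_image_of_mem f hx)
  have hsub : ∑ t ∈ E.image f, ((E.filter fun v => f v = t).card : ℝ) ^ 2
      ≤ ∑ t : F, ((E.filter fun v => f v = t).card : ℝ) ^ 2 :=
    Finset.sum_le_sum_of_subset_of_nonneg (Finset.subset_univ _) (fun t _ _ => by positivity)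
  have h2 : ∑ t : F, ((E.filter fun v => f v = t).card : ℝ) ^ 2
      = (((E ×ˢ E).filter fun p => f p.1 = f p.2).card : ℝ) := by
    exact_mod_cast congrArg (Nat.cast : ℕ → ℝ) (fiber_sq_eq_pairs E f)
  calc (E.card : ℝ) ^ 2 = (∑ t ∈ E.image f, ((E.filter fun v => f v = t).card : ℝ)) ^ 2 := by
        rw [hcard]; push_cast; ring
    _ ≤ ((E.image f).card : ℝ) * ∑ t ∈ E.image f, ((E.filter fun v => f v = t).card : ℝ) ^ 2 := by
        exact_mod_cast sq_sum_le_card_mul_sum_sq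
    _ ≤ _ := by rw [← h2]; exact mul_le_mul_of_nonneg_left hsub (Nat.cast_nonneg _)

theorem good_direction
    {F : Type*} [Field F] [Fintype F] [DecidableEq F] (q : ℕ) (hq : Fintype.card F = q)
    (E : Finset (F × F)) (Θ : Finset F) (hΘ : Θ.Nonempty) :
    ∃ θ ∈ Θ, ((E.image (fun v : F × F => v.1 + θ * v.2)).card : ℝ)
      ≥ (q : ℝ) * E.card * Θ.card / ((q : ℝ) ^ 2 + E.card * Θ.card) := by
  obtain rfl | hE := E.eq_empty_or_nonempty
  · obtain ⟨θ, hθ⟩ := hΘ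
    exact ⟨θ, hθ, by simp⟩
  set n : ℝ := (E.card : ℝ) with hn
  set m : ℝ := (Θ.card : ℝ) with hm
  have hq0 : 0 < (q : ℝ) := by
    have := Fintype.card_pos (α := F); rw [hq] at this; exact_mod_cast this
  have hn0 : 0 < n := by rw [hn]; exact_mod_cast hE.card_pos
  have hm0 : 0 < m := by rw [hm]; exact_mod_cast hΘ.card_pos
  have hmq : m ≤ (q : ℝ) := by
    rw [hm, ← hq]; exact_mod_cast Finset.card_le_card (Finset.subset_univ Θ)
  -- collision counts
  set N : F → ℕ := fun θ =>
    ((E ×ˢ E).filter fun p => p.1.1 + θ * p.1.2 = p.2.1 + θ * p.2.2).card with hN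
  have lowN : ∀ θ : F, n ^ 2 ≤ (q : ℝ) * (N θ : ℝ) := fun θ => by
    have := cs_lower E (fun v => v.1 + θ * v.2); rwa [hq] at this
  have lowInf : n ^ 2 ≤ (q : ℝ)
      * (((E ×ˢ E).filter fun p => p.1.2 = p.2.2).card : ℝ) := by
    have := cs_lower E (fun v => v.2); rwa [hq] at this
  -- total identity in ℝ
  have total : ∑ θ : F, (N θ : ℝ)
      + (((E ×ˢ E).filter fun p => p.1.2 = p.2.2).card : ℝ) = (q : ℝ) * n + n ^ 2 := by
    have := sum_collisions E
    rw [hq] at this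
    rw [hn]
    exact_mod_cast congrArg (Nat.cast : ℕ → ℝ) this
  -- bound the sum over Θ
  have splitsum : ∑ θ ∈ Θ, (N θ : ℝ) + ∑ θ ∈ Finset.univ \ Θ, (N θ : ℝ)
      = ∑ θ : F, (N θ : ℝ) := by
    rw [add_comm]
    exact Finset.sum_sdiff (Finset.subset_univ Θ)
  have hcompl : ((Finset.univ \ Θ).card : ℝ) = (q : ℝ) - m := by
    have h : Θ.card ≤ q := by rw [← hq]; exact Finset.card_le_card (Finset.subset_univ Θ)
    rw [Finset.card_sdiff_of_subset (Finset.subset_univ Θ), Finset.card_univ, hq, Nat.cast_sub h, hm]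
  have lowcompl : ((q : ℝ) - m) * (n ^ 2 / q) ≤ ∑ θ ∈ Finset.univ \ Θ, (N θ : ℝ) := by
    have : ∀ θ ∈ Finset.univ \ Θ, n ^ 2 / q ≤ (N θ : ℝ) := fun θ _ => by
      rw [div_le_iff₀ hq0, mul_comm]; exact lowN θ
    calc ((q : ℝ) - m) * (n ^ 2 / q) = ((Finset.univ \ Θ).card : ℝ) * (n ^ 2 / q) := by
          rw [hcompl]
      _ ≤ ∑ θ ∈ Finset.univ \ Θ, (N θ : ℝ) := by
          simpa [nsmul_eq_mul] using Finset.card_nsmul_le_sum _ _ _ this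
  have lowInf' : n ^ 2 / q ≤ (((E ×ˢ E).filter fun p => p.1.2 = p.2.2).card : ℝ) := by
    rw [div_le_iff₀ hq0, mul_comm]; exact lowInf
  have expand : ((q : ℝ) - m) * (n ^ 2 / q) = n ^ 2 - m * (n ^ 2 / q) := by
    field_simp
  have hs0 : 0 ≤ n ^ 2 / q := by positivity
  have sumTheta : ∑ θ ∈ Θ, (N θ : ℝ) ≤ (q : ℝ) * n + m * (n ^ 2 / q) := by
    linarith [total, splitsum, lowcompl, lowInf', expand, hs0]
  have pigeon : ∃ θ ∈ Θ, (N θ : ℝ) ≤ ((q : ℝ) * n + m * (n ^ 2 / q)) / m := by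
    apply Finset.exists_le_of_sum_le hΘ
    rw [Finset.sum_const, nsmul_eq_mul, ← hm]
    rw [mul_div_cancel₀ _ (ne_of_gt hm0)]
    exact sumTheta
  obtain ⟨θ, hθΘ, hθ⟩ := pigeon
  refine ⟨θ, hθΘ, ?_⟩
  set P : ℝ := ((E.image (fun v : F × F => v.1 + θ * v.2)).card : ℝ) with hP
  have hP0 : (0 : ℝ) ≤ P := by rw [hP]; exact Nat.cast_nonneg _
  have csP : n ^ 2 ≤ P * (N θ : ℝ) := cs_image E (fun v => v.1 + θ * v.2)
  have step1 : n ^ 2 ≤ P * (((q : ℝ) * n + m * (n ^ 2 / q)) / m) :=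
    le_trans csP (mul_le_mul_of_nonneg_left hθ hP0)
  have step2 : (q : ℝ) * m * n ^ 2 ≤ P * ((q : ℝ) ^ 2 + m * n) * n := by
    calc (q : ℝ) * m * n ^ 2
        ≤ (q : ℝ) * m * (P * (((q : ℝ) * n + m * (n ^ 2 / q)) / m)) :=
          mul_le_mul_of_nonneg_left step1 (le_of_lt (mul_pos hq0 hm0))
      _ = P * ((q : ℝ) ^ 2 + m * n) * n := by field_simp
  have step3 : (q : ℝ) * n * m ≤ P * ((q : ℝ) ^ 2 + n * m) := by
    have hfin : ((q : ℝ) * n * m) * n ≤ (P * ((q : ℝ) ^ 2 + n * m)) * n := by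
      ring_nf; ring_nf at step2; linarith
    exact le_of_mul_le_mul_right hfin hn0
  rw [ge_iff_le, div_le_iff₀ (by positivity)]
  exact step3
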